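/- Let t ∈ 𝒮'(ℝ^N) and ω ∈ ℕ₊ with sd(t) ≤ −ω. Then t has zero of order ω at the origin in the sense of Łojasiewicz: for every multi-index γ with |γ| < ω and every g ∈ 𝒮(ℝ^N), lim_{ε↘0} ⟨∂^γ t, g_ε⟩ = 0, where g_ε(q) := ε^{−N} g(q/ε). -/

import Mathlib

open MeasureTheory SchwartzMap Filter Topology

noncomputable section

abbrev Euc (N : ℕ) : Type := EuclideanSpace ℝ (Fin N)

/-- Iterated partial derivative `∂^α` (multi-index `α`) on Schwartz functions on `ℝ^N`. -/
def multiDeriv {N : ℕ} (α : Fin N → ℕ) : 𝓢(Euc N, ℂ) →L[ℂ] 𝓢(Euc N, ℂ) :=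
  (Finset.univ.toList (α := Fin N)).foldr
    (fun i A =>
      ((LineDeriv.lineDerivOpCLM ℂ 𝓢(Euc N, ℂ) (EuclideanSpace.single i (1 : ℝ)) :
          𝓢(Euc N, ℂ) →L[ℂ] 𝓢(Euc N, ℂ)) ^ (α i)).comp A)
    (ContinuousLinearMap.id ℂ _)

/-- `t(q) = O^dist(|q|^δ)` : the regularity condition of Duch, Def. 2.9 (case `M = 0`).
There are a neighbourhood `O` of the origin, a constant `C > 0` and continuous functions
`tc α` on `O`, all but finitely many zero, vanishing when `δ + |α| < 0`, bounded by
`C |q|^{δ+|α|}`, such that `t = Σ_α ∂^α (tc α)` on test functions supported in `O`. -/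
def OBig {N : ℕ} (t : 𝓢(Euc N, ℂ) →L[ℂ] ℂ) (δ : ℝ) : Prop :=
  ∃ O : Set (Euc N), IsOpen O ∧ (0 : Euc N) ∈ O ∧
  ∃ C : ℝ, 0 < C ∧
  ∃ tc : (Fin N → ℕ) → Euc N → ℂ,
    {α | tc α ≠ 0}.Finite ∧
    (∀ α, ContinuousOn (tc α) O) ∧
    (∀ α : Fin N → ℕ, δ + ((∑ i, α i : ℕ) : ℝ) < 0 → tc α = 0) ∧
    (∀ α : Fin N → ℕ, ∀ q ∈ O, ‖tc α q‖ ≤ C * ‖q‖ ^ (δ + ((∑ i, α i : ℕ) : ℝ))) ∧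
    (∀ g : 𝓢(Euc N, ℂ), HasCompactSupport ⇑g → tsupport ⇑g ⊆ O →
      t g = ∑ᶠ α : Fin N → ℕ,
        (-1 : ℂ) ^ ((∑ i, α i : ℕ)) * ∫ q in O, tc α q * multiDeriv α g q)

/-- `h ε` is the scaled family `q ↦ ε^{-N} g(q/ε)` (for `ε > 0`). -/
def IsScaledFam (N : ℕ) (g : 𝓢(Euc N, ℂ)) (h : ℝ → 𝓢(Euc N, ℂ)) : Prop :=
  ∀ ε : ℝ, 0 < ε → ∀ q : Euc N, h ε q = ((ε ^ N : ℝ)⁻¹ : ℂ) * g (ε⁻¹ • q)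

/-- `t` has value `c` at zero in the sense of Łojasiewicz:  for every `g ∈ 𝒮(ℝ^N)` with
`∫ g(q) d^N q/(2π)^N = 1` one has `lim_{ε↘0} ⟨t, g_ε⟩/(2π)^N = c`. -/
def HasLojValue {N : ℕ} (t : 𝓢(Euc N, ℂ) →L[ℂ] ℂ) (c : ℂ) : Prop :=
  ∀ g : 𝓢(Euc N, ℂ), (∫ q : Euc N, g q) = ((2 * Real.pi) ^ N : ℝ) →
    ∀ h : ℝ → 𝓢(Euc N, ℂ), IsScaledFam N g h →
      Tendsto (fun ε : ℝ => t (h ε) / ((2 * Real.pi) ^ N : ℝ))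
        (𝓝[>] (0 : ℝ)) (𝓝 c)

/-- The distributional derivative `∂^γ t`, `⟨∂^γ t, g⟩ = (−1)^{|γ|} ⟨t, ∂^γ g⟩`. -/
def distDeriv {N : ℕ} (γ : Fin N → ℕ) (t : 𝓢(Euc N, ℂ) →L[ℂ] ℂ) :
    𝓢(Euc N, ℂ) →L[ℂ] ℂ :=
  ((-1 : ℂ) ^ ((∑ i, γ i : ℕ))) • (t.comp (multiDeriv γ))

/-- `h λ` is the dilated family `x ↦ g(x/λ)` (for `λ > 0`). -/
def IsDilatedFam {N : ℕ} (g : 𝓢(Euc N, ℂ)) (h : ℝ → 𝓢(Euc N, ℂ)) : Prop :=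
  ∀ l : ℝ, 0 < l → ∀ x : Euc N, h l x = g (l⁻¹ • x)

/-- `s` belongs to the defining set of the Steinmann scaling degree of `t`:
`lim_{λ↘0} λ^s λ^{-N} ⟨t, g(·/λ)⟩ = 0` for every Schwartz `g`. -/
def InScalingSet {N : ℕ} (t : 𝓢(Euc N, ℂ) →L[ℂ] ℂ) (s : ℝ) : Prop :=
  ∀ g : 𝓢(Euc N, ℂ), ∀ h : ℝ → 𝓢(Euc N, ℂ), IsDilatedFam g h →
    Tendsto (fun l : ℝ => ((l ^ s * (l ^ N : ℝ)⁻¹ : ℝ) : ℂ) * t (h l))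
      (𝓝[>] (0 : ℝ)) (𝓝 0)


def dilE {N : ℕ} (l : ℝ) (hl : l ≠ 0) : Euc N ≃L[ℝ] Euc N :=
  (LinearEquiv.smulOfNeZero ℝ (Euc N) l⁻¹ (inv_ne_zero hl)).toContinuousLinearEquiv

def dil {N : ℕ} (l : ℝ) : 𝓢(Euc N, ℂ) →L[ℂ] 𝓢(Euc N, ℂ) :=
  if hl : 0 < l then SchwartzMap.compCLMOfContinuousLinearEquiv ℂ (dilE l hl.ne') else 0

lemma dil_apply {N : ℕ} {l : ℝ} (hl : 0 < l) (f : 𝓢(Euc N, ℂ)) (q : Euc N) :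
    dil l f q = f (l⁻¹ • q) := by
  simp [dil, hl, dilE, LinearEquiv.smulOfNeZero, LinearEquiv.smulOfUnit,
    DistribMulAction.toLinearEquiv]

lemma pderiv_dil {N : ℕ} {l : ℝ} (hl : 0 < l) (v : Euc N) (f : 𝓢(Euc N, ℂ)) :
    LineDeriv.lineDerivOpCLM ℂ 𝓢(Euc N, ℂ) v (dil l f) = ((l⁻¹ : ℝ) : ℂ) • dil l (LineDeriv.lineDerivOpCLM ℂ 𝓢(Euc N, ℂ) v f) := by
  ext q
  have hfd := f.differentiableAt (x := l⁻¹ • q)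
  have hcomp : (⇑(dil l f) : Euc N → ℂ) = ⇑f ∘ (fun x : Euc N => l⁻¹ • x) := by
    funext x; exact dil_apply hl f x
  have hAd : HasFDerivAt (fun x : Euc N => l⁻¹ • x)
      ((l⁻¹ : ℝ) • ContinuousLinearMap.id ℝ (Euc N)) q := by
    exact ((l⁻¹ : ℝ) • ContinuousLinearMap.id ℝ (Euc N)).hasFDerivAt (x := q)
  have h1 : HasFDerivAt (⇑f ∘ fun x : Euc N => l⁻¹ • x)
      ((fderiv ℝ f (l⁻¹ • q)).comp ((l⁻¹ : ℝ) • ContinuousLinearMap.id ℝ (Euc N))) q :=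
    hfd.hasFDerivAt.comp q hAd
  rw [LineDeriv.lineDerivOpCLM_apply, SchwartzMap.lineDerivOp_apply_eq_fderiv, hcomp, h1.fderiv]
  simp [dil_apply hl, LineDeriv.lineDerivOpCLM_apply, SchwartzMap.lineDerivOp_apply_eq_fderiv, Complex.real_smul, smul_eq_mul]

lemma pow_dil {N : ℕ} {l : ℝ} (hl : 0 < l) (v : Euc N) (n : ℕ) (f : 𝓢(Euc N, ℂ)) :
    ((LineDeriv.lineDerivOpCLM ℂ 𝓢(Euc N, ℂ) v : 𝓢(Euc N, ℂ) →L[ℂ] 𝓢(Euc N, ℂ)) ^ n) (dil l f) =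
      (((l⁻¹ : ℝ) : ℂ) ^ n) • dil l (((LineDeriv.lineDerivOpCLM ℂ 𝓢(Euc N, ℂ) v : 𝓢(Euc N, ℂ) →L[ℂ] 𝓢(Euc N, ℂ)) ^ n) f) := by
  induction n with
  | zero => simp
  | succ n ih =>
    rw [pow_succ', ContinuousLinearMap.mul_apply, ContinuousLinearMap.mul_apply, ih,
      ContinuousLinearMap.map_smul, pderiv_dil hl, smul_smul, pow_succ', mul_comm]

lemma foldr_dil {N : ℕ} (α : Fin N → ℕ) (L : List (Fin N)) {l : ℝ} (hl : 0 < l)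
    (f : 𝓢(Euc N, ℂ)) :
    (L.foldr (fun i A =>
        ((LineDeriv.lineDerivOpCLM ℂ 𝓢(Euc N, ℂ) (EuclideanSpace.single i (1 : ℝ)) :
            𝓢(Euc N, ℂ) →L[ℂ] 𝓢(Euc N, ℂ)) ^ (α i)).comp A)
      (ContinuousLinearMap.id ℂ _)) (dil l f) =
    (((l⁻¹ : ℝ) : ℂ) ^ ((L.map α).sum)) •
      dil l ((L.foldr (fun i A =>
        ((LineDeriv.lineDerivOpCLM ℂ 𝓢(Euc N, ℂ) (EuclideanSpace.single i (1 : ℝ)) :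
            𝓢(Euc N, ℂ) →L[ℂ] 𝓢(Euc N, ℂ)) ^ (α i)).comp A)
      (ContinuousLinearMap.id ℂ _)) f) := by
  induction L with
  | nil => simp
  | cons i L ih =>
    simp only [List.foldr_cons, ContinuousLinearMap.comp_apply, ih,
      ContinuousLinearMap.map_smul, pow_dil hl, List.map_cons, List.sum_cons, smul_smul, pow_add]
    ring_nf

lemma multiDeriv_dil {N : ℕ} (γ : Fin N → ℕ) {l : ℝ} (hl : 0 < l) (f : 𝓢(Euc N, ℂ)) :
    multiDeriv γ (dil l f) = (((l⁻¹ : ℝ) : ℂ) ^ (∑ i, γ i)) • dil l (multiDeriv γ f) := by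
  rw [multiDeriv, foldr_dil γ _ hl f, Finset.sum_map_toList]

/-- If `sd(t) ≤ −ω` (equivalently, since the defining set of the scaling
degree is upward closed, every `s > −ω` belongs to it), then `t` has zero of order `ω` at the
origin in the sense of Łojasiewicz. -/
theorem stmt16 (N : ℕ) (t : 𝓢(Euc N, ℂ) →L[ℂ] ℂ) (ω : ℕ) (hω : 0 < ω)
    (hsd : ∀ s : ℝ, -(ω : ℝ) < s → InScalingSet t s) :
    ∀ γ : Fin N → ℕ, ((∑ i, γ i : ℕ) : ℝ) < ω →
      HasLojValue (distDeriv γ t) 0 := by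
  intro γ hγ g hint h hh
  set m := ∑ i, γ i with hm
  have hmω : -(ω : ℝ) < -(m : ℝ) := by linarith
  set g' := multiDeriv γ g with hg'
  have hdil : IsDilatedFam g' (fun l => dil l g') := fun l hl x => dil_apply hl g' x
  have key := hsd (-(m : ℝ)) hmω g' (fun l => dil l g') hdil
  have key2 := key.const_mul (((-1 : ℂ) ^ m) / (((2 * Real.pi) ^ N : ℝ) : ℂ))
  rw [mul_zero] at key2
  refine key2.congr' ?_
  filter_upwards [self_mem_nhdsWithin] with ε hε
  have hε : (0 : ℝ) < ε := hε
  have hhε : h ε = (((ε ^ N : ℝ)⁻¹ : ℂ)) • dil ε g := by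
    ext q
    rw [hh ε hε q, SchwartzMap.smul_apply, dil_apply hε, smul_eq_mul]
  have hmd : multiDeriv γ (h ε) =
      ((((ε ^ N : ℝ)⁻¹ : ℂ)) * (((ε⁻¹ : ℝ) : ℂ) ^ m)) • dil ε g' := by
    rw [hhε, ContinuousLinearMap.map_smul, multiDeriv_dil γ hε, smul_smul]
  have hdist : distDeriv γ t (h ε) =
      ((-1 : ℂ) ^ m) * (((ε ^ N : ℝ)⁻¹ : ℂ) * (((ε⁻¹ : ℝ) : ℂ) ^ m)) * t (dil ε g') := by
    rw [distDeriv]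
    simp only [ContinuousLinearMap.smul_apply, ContinuousLinearMap.comp_apply, ← hm]
    rw [hmd, ContinuousLinearMap.map_smul, smul_eq_mul, smul_eq_mul]
    ring
  have hrpow : ε ^ (-(m : ℝ)) = (ε ^ m : ℝ)⁻¹ := by
    rw [Real.rpow_neg hε.le, Real.rpow_natCast]
  rw [hdist, hrpow]
  push_cast
  field_simp
  ring


end
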